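/- arXiv:1805.03576 — 5 statements merged into one kernel-verified Lean document; each statement's English description precedes it below -/
import Mathlib

section
/- For every ε with 0 ≤ ε < 1, the function u(θ,φ) = cos θ satisfies Δ_FS u = -2·u at every point (θ,φ) with 0 < θ < π and φ ∈ ℝ; that is, cos θ is an eigenfunction of the Finslerian Laplace operator of the Finslerian sphere with eigenvalue -2, independent of ε. -/
open Real

/-- The Finslerian Laplace operator of the "Finslerian sphere" with parameter `ε`,
acting on a function `u : ℝ → ℝ → ℝ` of the angular variables `(θ, φ)`. -/
noncomputable def finslerLaplacian (ε : ℝ) (u : ℝ → ℝ → ℝ) (θ φ : ℝ) : ℝ :=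
  (2 * (1 - ε ^ 2 * sin θ ^ 2) ^ ((3 : ℝ) / 2) /
      (sin θ ^ 2 * (1 + Real.sqrt (1 - ε ^ 2 * sin θ ^ 2)))) *
    deriv (deriv (u θ)) φ
  + (2 * (1 - ε ^ 2 * sin θ ^ 2) / (1 + Real.sqrt (1 - ε ^ 2 * sin θ ^ 2))) *
    deriv (deriv (fun t => u t φ)) θ
  + (2 * cos θ * (ε ^ 2 * sin θ ^ 2 + Real.sqrt (1 - ε ^ 2 * sin θ ^ 2)) /
      (sin θ * (1 + Real.sqrt (1 - ε ^ 2 * sin θ ^ 2)))) *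
    deriv (fun t => u t φ) θ

/-- `cos θ` is an eigenfunction of the Finslerian Laplace operator with eigenvalue `-2`,
independently of `ε`. -/
theorem finslerLaplacian_cos_eigen (ε : ℝ) (hε0 : 0 ≤ ε) (hε1 : ε < 1)
    (θ φ : ℝ) (hθ0 : 0 < θ) (hθπ : θ < Real.pi) :
    finslerLaplacian ε (fun θ' _ => Real.cos θ') θ φ = -2 * Real.cos θ := by
  have hsin : 0 < Real.sin θ := Real.sin_pos_of_pos_of_lt_pi hθ0 hθπ
  have hs : ε ^ 2 * Real.sin θ ^ 2 ≤ 1 := by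
    have h1 : ε ^ 2 ≤ 1 := by nlinarith
    have h2 : Real.sin θ ^ 2 ≤ 1 := by nlinarith [Real.sin_le_one θ]
    nlinarith [sq_nonneg ε, sq_nonneg (Real.sin θ)]
  set s := ε ^ 2 * Real.sin θ ^ 2 with hsdef
  have hr : Real.sqrt (1 - s) ^ 2 = 1 - s := Real.sq_sqrt (by linarith)
  have hrpos : 0 < 1 + Real.sqrt (1 - s) := by positivity
  -- derivatives
  have d1 : deriv (fun t : ℝ => Real.cos t) θ = -Real.sin θ := by
    simp [Real.deriv_cos]
  have d2 : deriv (deriv (fun t : ℝ => Real.cos t)) θ = -Real.cos θ := by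
    have : deriv (fun t : ℝ => Real.cos t) = fun t => -Real.sin t := by
      funext t; simp [Real.deriv_cos]
    rw [this]
    simp
  have dphi : deriv (deriv (fun _ : ℝ => Real.cos θ)) φ = 0 := by
    simp
  unfold finslerLaplacian
  simp only []
  rw [dphi, d2, d1]
  field_simp
  nlinarith [hr, hrpos, hsin]
end

section
/- For every ε with 0 ≤ ε < 1, the function u(θ,φ) = sin θ · sin φ satisfies Δ_FS u = (-2 + 2ε²)·u at every point (θ,φ) with 0 < θ < π and φ ∈ ℝ; that is, sin θ sin φ is an eigenfunction of the Finslerian Laplace operator of the Finslerian sphere with eigenvalue -2 + 2ε². -/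
open Real

/-- `sin θ · sin φ` is an eigenfunction of the Finslerian Laplace operator with eigenvalue
`-2 + 2ε²`. -/
theorem finslerLaplacian_sin_sin_eigen (ε : ℝ) (hε0 : 0 ≤ ε) (hε1 : ε < 1)
    (θ φ : ℝ) (hθ0 : 0 < θ) (hθπ : θ < Real.pi) :
    finslerLaplacian ε (fun θ' φ' => Real.sin θ' * Real.sin φ') θ φ =
      (-2 + 2 * ε ^ 2) * (Real.sin θ * Real.sin φ) := by
  have d1 : deriv (fun φ' => Real.sin θ * Real.sin φ') = fun φ' => Real.sin θ * Real.cos φ' := by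
    funext x
    simp
  have d2 : deriv (deriv (fun φ' => Real.sin θ * Real.sin φ')) φ
      = -(Real.sin θ * Real.sin φ) := by
    rw [d1]
    simp
  have e1 : deriv (fun t => Real.sin t * Real.sin φ) = fun t => Real.cos t * Real.sin φ := by
    funext x
    simp [deriv_mul_const]
  have e2 : deriv (deriv (fun t => Real.sin t * Real.sin φ)) θ
      = -(Real.sin θ * Real.sin φ) := by
    rw [e1]
    simp [deriv_mul_const]
  have e1' : deriv (fun t => Real.sin t * Real.sin φ) θ = Real.cos θ * Real.sin φ := by
    rw [e1]
  have hs : 0 < Real.sin θ := Real.sin_pos_of_pos_of_lt_pi hθ0 hθπ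
  have hs1 : Real.sin θ ^ 2 ≤ 1 := by
    nlinarith [Real.sin_sq_add_cos_sq θ, sq_nonneg (Real.cos θ)]
  have hx : 0 < 1 - ε ^ 2 * Real.sin θ ^ 2 := by nlinarith
  have hA0 : 0 < Real.sqrt (1 - ε ^ 2 * Real.sin θ ^ 2) := Real.sqrt_pos.mpr hx
  have hrpow : (1 - ε ^ 2 * Real.sin θ ^ 2) ^ ((3 : ℝ) / 2)
      = (1 - ε ^ 2 * Real.sin θ ^ 2) * Real.sqrt (1 - ε ^ 2 * Real.sin θ ^ 2) := by
    rw [show (3 : ℝ) / 2 = 1 + 1 / 2 by norm_num, Real.rpow_add hx, Real.rpow_one,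
      ← Real.sqrt_eq_rpow]
  have hcos : Real.cos θ ^ 2 = 1 - Real.sin θ ^ 2 := Real.cos_sq' θ
  unfold finslerLaplacian
  rw [d2, e2, e1', hrpow]
  have h1 : (1 : ℝ) + Real.sqrt (1 - ε ^ 2 * Real.sin θ ^ 2) ≠ 0 := by positivity
  have hsne : Real.sin θ ≠ 0 := hs.ne'
  field_simp
  linear_combination ((1 + Real.sqrt (1 - ε ^ 2 * Real.sin θ ^ 2)) ^ 2 * Real.sin θ ^ 2 *
    Real.sin φ * (2 * Real.sqrt (1 - ε ^ 2 * Real.sin θ ^ 2) + 2 * ε ^ 2 * Real.sin θ ^ 2)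
    + Real.sin φ * (ε ^ 2 * Real.sin θ ^ 2 - 4 * ε ^ 2 * Real.sin θ ^ 4 * Real.sqrt (1 - ε ^ 2 * Real.sin θ ^ 2)
    - 2 * ε ^ 2 * Real.sin θ ^ 4 * Real.sqrt (1 - ε ^ 2 * Real.sin θ ^ 2) ^ 2 - 2 * ε ^ 2 * Real.sin θ ^ 4 - 2 * Real.sin θ ^ 2 * Real.sqrt (1 - ε ^ 2 * Real.sin θ ^ 2)
    - 4 * Real.sin θ ^ 2 * Real.sqrt (1 - ε ^ 2 * Real.sin θ ^ 2) ^ 2 - 2 * Real.sin θ ^ 2 * Real.sqrt (1 - ε ^ 2 * Real.sin θ ^ 2) ^ 3 + Real.sqrt (1 - ε ^ 2 * Real.sin θ ^ 2))) * hcos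
end

section
/- For every ε with 0 ≤ ε < 1, the Holmes–Thompson volume of the Finslerian sphere equals 4π/(1-ε²); explicitly, ∫₀^{2π} ∫₀^{π} sin θ · (1-ε²sin²θ)^{-3/2} dθ dφ = 4π/(1-ε²). -/
open Real MeasureTheory

lemma finsler_pos (ε : ℝ) (hε0 : 0 ≤ ε) (hε1 : ε < 1) (θ : ℝ) :
    0 < 1 - ε ^ 2 * Real.sin θ ^ 2 := by
  nlinarith [Real.sin_sq_le_one θ, sq_nonneg ε, sq_nonneg (Real.sin θ),
    mul_nonneg (mul_nonneg hε0 hε0) (sq_nonneg (Real.sin θ))]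

lemma finsler_inner (ε : ℝ) (hε0 : 0 ≤ ε) (hε1 : ε < 1) :
    (∫ θ in (0 : ℝ)..Real.pi,
        Real.sin θ * (1 - ε ^ 2 * Real.sin θ ^ 2) ^ (-(3 : ℝ) / 2)) =
      2 / (1 - ε ^ 2) := by
  have ha : (0 : ℝ) < 1 - ε ^ 2 := by nlinarith
  set F : ℝ → ℝ := fun θ =>
    (-(Real.cos θ) / (1 - ε ^ 2)) * (1 - ε ^ 2 * Real.sin θ ^ 2) ^ (-(1 : ℝ) / 2) with hF
  have hderiv : ∀ θ ∈ Set.uIcc (0 : ℝ) Real.pi,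
      HasDerivAt F (Real.sin θ * (1 - ε ^ 2 * Real.sin θ ^ 2) ^ (-(3 : ℝ) / 2)) θ := by
    intro θ _
    have hg : 0 < 1 - ε ^ 2 * Real.sin θ ^ 2 := finsler_pos ε hε0 hε1 θ
    have h1 : HasDerivAt (fun θ : ℝ => -(Real.cos θ) / (1 - ε ^ 2))
        (Real.sin θ / (1 - ε ^ 2)) θ := by
      simpa [neg_div] using ((Real.hasDerivAt_cos θ).neg.div_const (1 - ε ^ 2))
    have hginner : HasDerivAt (fun θ : ℝ => 1 - ε ^ 2 * Real.sin θ ^ 2)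
        (-(ε ^ 2 * (2 * Real.sin θ * Real.cos θ))) θ := by
      have := ((Real.hasDerivAt_sin θ).pow 2).const_mul (ε ^ 2)
      simpa [mul_comm, mul_left_comm, mul_assoc] using (this.const_sub 1)
    have h2 : HasDerivAt (fun θ : ℝ => (1 - ε ^ 2 * Real.sin θ ^ 2) ^ (-(1 : ℝ) / 2))
        (-(ε ^ 2 * (2 * Real.sin θ * Real.cos θ)) * (-(1 : ℝ) / 2) *
          (1 - ε ^ 2 * Real.sin θ ^ 2) ^ (-(1 : ℝ) / 2 - 1)) θ :=
      hginner.rpow_const (Or.inl hg.ne')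
    have := h1.mul h2
    refine HasDerivAt.congr_deriv this ?_
    symm
    have e1 : (1 - ε ^ 2 * Real.sin θ ^ 2) ^ (-(1 : ℝ) / 2 - 1)
        = (1 - ε ^ 2 * Real.sin θ ^ 2) ^ (-(3 : ℝ) / 2) := by norm_num
    have e2 : (1 - ε ^ 2 * Real.sin θ ^ 2) ^ (-(1 : ℝ) / 2)
        = (1 - ε ^ 2 * Real.sin θ ^ 2) * (1 - ε ^ 2 * Real.sin θ ^ 2) ^ (-(3 : ℝ) / 2) := by
      rw [show (-(1 : ℝ) / 2) = 1 + (-(3 : ℝ) / 2) by norm_num, Real.rpow_add hg,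
        Real.rpow_one]
    rw [e1, e2]
    have hsc : Real.sin θ ^ 2 + Real.cos θ ^ 2 = 1 := Real.sin_sq_add_cos_sq θ
    set X := (1 - ε ^ 2 * Real.sin θ ^ 2) ^ (-(3 : ℝ) / 2) with hX
    field_simp
    ring_nf
    linear_combination (ε ^ 2 * Real.sin θ * X) * hsc
  have hcont : ContinuousOn
      (fun θ => Real.sin θ * (1 - ε ^ 2 * Real.sin θ ^ 2) ^ (-(3 : ℝ) / 2))
      (Set.uIcc (0 : ℝ) Real.pi) := by
    apply Continuous.continuousOn
    apply Real.continuous_sin.mul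
    apply Continuous.rpow_const
    · continuity
    · intro x; exact Or.inl (finsler_pos ε hε0 hε1 x).ne'
  have := intervalIntegral.integral_eq_sub_of_hasDerivAt hderiv
    (hcont.intervalIntegrable)
  rw [this]
  have h0 : F 0 = -1 / (1 - ε ^ 2) := by
    simp [hF, Real.cos_zero, Real.sin_zero]
  have hpi : F Real.pi = 1 / (1 - ε ^ 2) := by
    simp [hF, Real.cos_pi, Real.sin_pi]
  rw [h0, hpi]
  ring

/-- The Holmes–Thompson volume of the "Finslerian sphere" equals `4π/(1-ε²)`:
`∫₀^{2π} ∫₀^{π} sin θ · (1-ε²sin²θ)^{-3/2} dθ dφ = 4π/(1-ε²)`. -/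
theorem holmesThompson_volume_finslerSphere (ε : ℝ) (hε0 : 0 ≤ ε) (hε1 : ε < 1) :
    (∫ φ in (0 : ℝ)..(2 * Real.pi),
        ∫ θ in (0 : ℝ)..Real.pi,
          Real.sin θ * (1 - ε ^ 2 * Real.sin θ ^ 2) ^ (-(3 : ℝ) / 2)) =
      4 * Real.pi / (1 - ε ^ 2) := by
  rw [intervalIntegral.integral_congr (g := fun _ => 2 / (1 - ε ^ 2))
    (fun φ _ => finsler_inner ε hε0 hε1)]
  rw [intervalIntegral.integral_const, smul_eq_mul]
  field_simp
  ring
end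

section
/- For every ε with 0 ≤ ε < 1, setting n₁ = (-1 + √(9-8ε²))/2, the function W(r,θ,φ) = r^{n₁} · sin θ · cos φ satisfies the Finslerian Laplace equation (1/r²)·∂/∂r(r²·∂W/∂r) + (1/r²)·Δ_FS W = 0 at every point with r > 0, 0 < θ < π, φ ∈ ℝ, where Δ_FS acts on the angular variables (θ,φ). -/
open Real

/-- With `n₁ = (-1 + √(9-8ε²))/2`, the function `W(r,θ,φ) = r^{n₁}·sin θ·cos φ` satisfies the
Finslerian Laplace equation `(1/r²)·∂_r(r²·∂_r W) + (1/r²)·Δ_FS W = 0` for `r > 0`,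
`0 < θ < π`. -/
theorem finslerLaplaceEq_dipole_m1 (ε : ℝ) (hε0 : 0 ≤ ε) (hε1 : ε < 1)
    (r θ φ : ℝ) (hr : 0 < r) (hθ0 : 0 < θ) (hθπ : θ < Real.pi) :
    (1 / r ^ 2) *
        deriv (fun s : ℝ => s ^ 2 *
          deriv (fun s' : ℝ =>
            s' ^ ((-1 + Real.sqrt (9 - 8 * ε ^ 2)) / 2) * Real.sin θ * Real.cos φ) s) r
      + (1 / r ^ 2) *
        finslerLaplacian ε
          (fun θ' φ' =>
            r ^ ((-1 + Real.sqrt (9 - 8 * ε ^ 2)) / 2) * Real.sin θ' * Real.cos φ') θ φ = 0 := by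
  
  set n : ℝ := (-1 + Real.sqrt (9 - 8 * ε ^ 2)) / 2 with hn
  have h9 : (0:ℝ) ≤ 9 - 8 * ε ^ 2 := by nlinarith
  have hDsq : Real.sqrt (9 - 8 * ε ^ 2) ^ 2 = 9 - 8 * ε ^ 2 := Real.sq_sqrt h9
  have hnn : n * (n + 1) = 2 - 2 * ε ^ 2 := by
    rw [hn]; linear_combination hDsq / 4
  -- sin θ positive
  have hs : 0 < Real.sin θ := Real.sin_pos_of_pos_of_lt_pi hθ0 hθπ
  have hε2 : ε ^ 2 < 1 := by nlinarith
  have hS : 0 < 1 - ε ^ 2 * Real.sin θ ^ 2 := by nlinarith [Real.sin_sq_le_one θ, sq_nonneg ε]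
  set q : ℝ := Real.sqrt (1 - ε ^ 2 * Real.sin θ ^ 2) with hqdef
  have hq : 0 < q := Real.sqrt_pos.mpr hS
  have hq2 : q ^ 2 = 1 - ε ^ 2 * Real.sin θ ^ 2 := Real.sq_sqrt hS.le
  have hq3 : (1 - ε ^ 2 * Real.sin θ ^ 2) ^ ((3:ℝ)/2) = (1 - ε ^ 2 * Real.sin θ ^ 2) * q := by
    rw [show (3:ℝ)/2 = 1 + 1/2 by norm_num, Real.rpow_add hS, Real.rpow_one,
      ← Real.sqrt_eq_rpow, ← hqdef]
  -- radial derivative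
  have hinner : ∀ s : ℝ, s ≠ 0 →
      deriv (fun s' : ℝ => s' ^ n * Real.sin θ * Real.cos φ) s
        = n * Real.sin θ * Real.cos φ * s ^ (n - 1) := by
    intro s hs0
    have := (((Real.hasDerivAt_rpow_const (p := n) (Or.inl hs0)).mul_const
      (Real.sin θ)).mul_const (Real.cos φ)).deriv
    rw [this]; ring
  have hrad : deriv (fun s : ℝ => s ^ 2 *
      deriv (fun s' : ℝ => s' ^ n * Real.sin θ * Real.cos φ) s) r
        = n * Real.sin θ * Real.cos φ * ((n + 1) * r ^ n) := by
    have hevent : (fun s : ℝ => s ^ 2 *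
        deriv (fun s' : ℝ => s' ^ n * Real.sin θ * Real.cos φ) s)
          =ᶠ[nhds r] fun s => n * Real.sin θ * Real.cos φ * s ^ (n + 1) := by
      filter_upwards [eventually_gt_nhds hr] with s hs0
      rw [hinner s hs0.ne', ← Real.rpow_natCast s 2]
      have hpow : s ^ ((2:ℕ):ℝ) * s ^ (n - 1) = s ^ (n + 1) := by
        rw [← Real.rpow_add hs0]; ring_nf
      linear_combination (n * Real.sin θ * Real.cos φ) * hpow
    rw [hevent.deriv_eq]
    have := ((Real.hasDerivAt_rpow_const (p := n + 1)
      (Or.inl hr.ne')).const_mul (n * Real.sin θ * Real.cos φ)).deriv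
    rw [this]; ring_nf
  -- angular derivatives
  have hphi : deriv (deriv (fun φ' => r ^ n * Real.sin θ * Real.cos φ')) φ
      = -(r ^ n * Real.sin θ * Real.cos φ) := by
    have h1 : deriv (fun φ' => r ^ n * Real.sin θ * Real.cos φ')
        = fun x => -(r ^ n * Real.sin θ * Real.sin x) := by
      funext x
      have := ((Real.hasDerivAt_cos x).const_mul (r ^ n * Real.sin θ)).deriv
      rw [this]; ring
    rw [h1]
    have := (((Real.hasDerivAt_sin φ).const_mul (r ^ n * Real.sin θ)).neg).deriv
    simpa using this
  have hth1 : deriv (fun t => r ^ n * Real.sin t * Real.cos φ) θ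
      = r ^ n * Real.cos θ * Real.cos φ := by
    have := (((Real.hasDerivAt_sin θ).const_mul (r ^ n)).mul_const (Real.cos φ)).deriv
    rw [this]
  have hth2 : deriv (deriv (fun t => r ^ n * Real.sin t * Real.cos φ)) θ
      = -(r ^ n * Real.sin θ * Real.cos φ) := by
    have h1 : deriv (fun t => r ^ n * Real.sin t * Real.cos φ)
        = fun t => r ^ n * Real.cos t * Real.cos φ := by
      funext t
      exact (((Real.hasDerivAt_sin t).const_mul (r ^ n)).mul_const (Real.cos φ)).deriv
    rw [h1]
    have := (((Real.hasDerivAt_cos θ).const_mul (r ^ n)).mul_const (Real.cos φ)).deriv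
    rw [this]; ring
  -- assemble
  rw [hrad]
  simp only [finslerLaplacian]
  rw [hphi, hth1, hth2, hq3, ← hqdef]
  have hcos : Real.cos θ ^ 2 = 1 - Real.sin θ ^ 2 := by
    have := Real.sin_sq_add_cos_sq θ; linarith
  have h1q : 0 < 1 + q := by linarith
  field_simp
  linear_combination (Real.cos φ * r ^ n) *
    ((Real.sin θ ^ 2 * (1 + q)) * hnn + (2 * (ε ^ 2 * Real.sin θ ^ 2 + q)) * hcos)
end

section
/- For every ε with 0 ≤ ε < 1 and all A, B ∈ ℝ, the function W(r,θ,φ) = (A·r + B·r^{-2})·cos θ satisfies the Finslerian Laplace equation (1/r²)·∂/∂r(r²·∂W/∂r) + (1/r²)·Δ_FS W = 0 at every point with r > 0, 0 < θ < π, φ ∈ ℝ, where Δ_FS acts on the angular variables (θ,φ); that is, the dipolar term of the multipole expansion of the gravitational potential is the same as in the Riemannian case, for every value of the Finslerian parameter ε. -/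
open Real

/-- The function `W(r,θ,φ) = (A·r + B·r⁻²)·cos θ` satisfies the Finslerian Laplace equation
`(1/r²)·∂_r(r²·∂_r W) + (1/r²)·Δ_FS W = 0` for `r > 0`, `0 < θ < π`, for every `0 ≤ ε < 1`:
the dipolar term of the multipole expansion is the same as in the Riemannian case. -/
theorem finslerLaplaceEq_dipole (ε : ℝ) (hε0 : 0 ≤ ε) (hε1 : ε < 1) (A B : ℝ)
    (r θ φ : ℝ) (hr : 0 < r) (hθ0 : 0 < θ) (hθπ : θ < Real.pi) :
    (1 / r ^ 2) *
        deriv (fun s : ℝ => s ^ 2 *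
          deriv (fun s' : ℝ => (A * s' + B * s' ^ (-2 : ℝ)) * Real.cos θ) s) r
      + (1 / r ^ 2) *
        finslerLaplacian ε
          (fun θ' _ => (A * r + B * r ^ (-2 : ℝ)) * Real.cos θ') θ φ = 0 := by
  have hrne : r ≠ 0 := hr.ne'
  set C := A * r + B * r ^ (-2 : ℝ) with hC
  -- angular facts
  have hsinpos : 0 < Real.sin θ := Real.sin_pos_of_pos_of_lt_pi hθ0 hθπ
  have hsin : Real.sin θ ≠ 0 := ne_of_gt hsinpos
  have hE : ε ^ 2 * Real.sin θ ^ 2 < 1 := by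
    have h1 : Real.sin θ ^ 2 ≤ 1 := Real.sin_sq_le_one θ
    nlinarith
  have hEpos : 0 < 1 - ε ^ 2 * Real.sin θ ^ 2 := by linarith
  set s := Real.sqrt (1 - ε ^ 2 * Real.sin θ ^ 2) with hs
  have hs2 : s ^ 2 = 1 - ε ^ 2 * Real.sin θ ^ 2 := Real.sq_sqrt hEpos.le
  have hspos : 0 < s := Real.sqrt_pos.mpr hEpos
  have hsne : (1 : ℝ) + s ≠ 0 := by positivity
  -- angular derivatives
  have hθ1 : deriv (fun t => C * Real.cos t) = fun t => C * (-Real.sin t) := by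
    funext t
    rw [deriv_const_mul_field, Real.deriv_cos]
  have hθ2 : deriv (deriv (fun t => C * Real.cos t)) θ = C * (-Real.cos θ) := by
    rw [hθ1]
    simp only [mul_neg]
    rw [deriv.fun_neg, deriv_const_mul_field, Real.deriv_sin]
  have hθ1' : deriv (fun t => C * Real.cos t) θ = C * (-Real.sin θ) := by rw [hθ1]
  -- radial derivatives
  have hderiv_inner : ∀ x : ℝ, x ≠ 0 →
      HasDerivAt (fun x : ℝ => (A * x + B * x ^ (-2 : ℝ)) * Real.cos θ)
        ((A + B * ((-2) * x ^ (-3 : ℝ))) * Real.cos θ) x := by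
    intro x hx
    have h1 : HasDerivAt (fun y : ℝ => y ^ (-2 : ℝ)) ((-2) * x ^ (-3 : ℝ)) x := by
      have := Real.hasDerivAt_rpow_const (x := x) (p := (-2 : ℝ)) (Or.inl hx)
      convert this using 2
      norm_num
    have h2 : HasDerivAt (fun y : ℝ => A * y + B * y ^ (-2 : ℝ))
        (A + B * ((-2) * x ^ (-3 : ℝ))) x := by
      have hA : HasDerivAt (fun y : ℝ => A * y) A x := by
        simpa using (hasDerivAt_id x).const_mul A
      exact hA.add (h1.const_mul B)
    exact h2.mul_const _
  have hev : (fun x : ℝ => x ^ 2 *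
        deriv (fun s' : ℝ => (A * s' + B * s' ^ (-2 : ℝ)) * Real.cos θ) x)
      =ᶠ[nhds r] fun x : ℝ => x ^ 2 * ((A + B * ((-2) * x ^ (-3 : ℝ))) * Real.cos θ) := by
    filter_upwards [eventually_ne_nhds hrne] with x hx
    rw [(hderiv_inner x hx).deriv]
  have h3 : HasDerivAt (fun y : ℝ => y ^ (-3 : ℝ)) ((-3) * r ^ (-4 : ℝ)) r := by
    have := Real.hasDerivAt_rpow_const (x := r) (p := (-3 : ℝ)) (Or.inl hrne)
    convert this using 2
    norm_num
  have houter : HasDerivAt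
      (fun x : ℝ => x ^ 2 * ((A + B * ((-2) * x ^ (-3 : ℝ))) * Real.cos θ))
      (2 * r * ((A + B * ((-2) * r ^ (-3 : ℝ))) * Real.cos θ)
        + r ^ 2 * (B * ((-2) * ((-3) * r ^ (-4 : ℝ))) * Real.cos θ)) r := by
    have hp : HasDerivAt (fun x : ℝ => x ^ 2) (2 * r) r := by
      simpa using hasDerivAt_pow 2 r
    have hq : HasDerivAt (fun x : ℝ => (A + B * ((-2) * x ^ (-3 : ℝ))) * Real.cos θ)
        (B * ((-2) * ((-3) * r ^ (-4 : ℝ))) * Real.cos θ) r := by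
      have := (((h3.const_mul (-2 : ℝ)).const_mul B).const_add A).mul_const (Real.cos θ)
      convert this using 1
    simpa [mul_comm] using hp.fun_mul hq
  have hrad : deriv (fun x : ℝ => x ^ 2 *
      deriv (fun s' : ℝ => (A * s' + B * s' ^ (-2 : ℝ)) * Real.cos θ) x) r
      = 2 * r * ((A + B * ((-2) * r ^ (-3 : ℝ))) * Real.cos θ)
        + r ^ 2 * (B * ((-2) * ((-3) * r ^ (-4 : ℝ))) * Real.cos θ) := by
    rw [hev.deriv_eq, houter.deriv]
  -- rpow to inverse powers
  have hm2 : r ^ (-2 : ℝ) = (r ^ 2)⁻¹ := by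
    rw [show (-2 : ℝ) = -((2 : ℕ) : ℝ) by norm_num, Real.rpow_neg hr.le, Real.rpow_natCast]
  have hm3 : r ^ (-3 : ℝ) = (r ^ 3)⁻¹ := by
    rw [show (-3 : ℝ) = -((3 : ℕ) : ℝ) by norm_num, Real.rpow_neg hr.le, Real.rpow_natCast]
  have hm4 : r ^ (-4 : ℝ) = (r ^ 4)⁻¹ := by
    rw [show (-4 : ℝ) = -((4 : ℕ) : ℝ) by norm_num, Real.rpow_neg hr.le, Real.rpow_natCast]
  rw [hrad]
  simp only [finslerLaplacian, ← hs]
  rw [hθ2, hθ1']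
  simp only [deriv_const', deriv_const]
  rw [hC, hm2, hm3, hm4]
  have hr2 : (r : ℝ) ^ 2 ≠ 0 := by positivity
  field_simp
  ring_nf
end
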